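/- Let K > 0, L > 0, T > 0 and let y : [0, T] → ℝ be continuously differentiable with 0 < y(t) ≤ K for all t ∈ [0, T] and y′(t) ≤ L · y(t) · ln( K / y(t) ) for all t ∈ [0, T]. Then for all t ∈ [0, T]: y(t) ≤ K · ( y(0) / K )^{exp(−L t)}. -/

import Mathlib

theorem log_gronwall_inequality (K L T : ℝ) (hK : 0 < K) (hL : 0 < L) (hT : 0 < T)
    (y y' : ℝ → ℝ)
    (hderiv : ∀ t ∈ Set.Icc (0 : ℝ) T, HasDerivAt y (y' t) t)
    (hcont : ContinuousOn y' (Set.Icc (0 : ℝ) T))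
    (hpos : ∀ t ∈ Set.Icc (0 : ℝ) T, 0 < y t)
    (hbd : ∀ t ∈ Set.Icc (0 : ℝ) T, y t ≤ K)
    (hineq : ∀ t ∈ Set.Icc (0 : ℝ) T, y' t ≤ L * y t * Real.log (K / y t)) :
    ∀ t ∈ Set.Icc (0 : ℝ) T, y t ≤ K * (y 0 / K) ^ Real.exp (-L * t) := by
  intro t ht
  set g : ℝ → ℝ := fun s => Real.exp (L * s) * (Real.log K - Real.log (y s)) with hgdef
  have hg' : ∀ s ∈ Set.Icc (0:ℝ) T, HasDerivAt g
      (L * Real.exp (L * s) * (Real.log K - Real.log (y s))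
        + Real.exp (L * s) * (0 - y' s / y s)) s := by
    intro s hs
    have h1 : HasDerivAt (fun u : ℝ => Real.exp (L * u)) (Real.exp (L * s) * L) s := by
      have := (Real.hasDerivAt_exp (L * s)).comp s ((hasDerivAt_id s).const_mul L)
      exact this.congr_deriv (by simp)
    have h2 : HasDerivAt (fun u : ℝ => Real.log K - Real.log (y u)) (0 - y' s / y s) s :=
      (hasDerivAt_const s (Real.log K)).sub ((hderiv s hs).log (ne_of_gt (hpos s hs)))
    have := h1.mul h2
    have e : g = (fun u : ℝ => Real.exp (L * u)) * (fun u : ℝ => Real.log K - Real.log (y u)) := rfl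
    rw [e]
    exact this.congr_deriv (by ring)
  have hnn : ∀ s ∈ Set.Icc (0:ℝ) T,
      0 ≤ L * Real.exp (L * s) * (Real.log K - Real.log (y s))
        + Real.exp (L * s) * (0 - y' s / y s) := by
    intro s hs
    have hy := hpos s hs
    have hkey : y' s / y s ≤ L * (Real.log K - Real.log (y s)) := by
      have h := hineq s hs
      rw [Real.log_div (ne_of_gt hK) (ne_of_gt hy)] at h
      rw [div_le_iff₀ hy]
      linarith [h]
    have hexp : (0:ℝ) < Real.exp (L * s) := Real.exp_pos _
    nlinarith [hexp, hkey]
  have hmono : MonotoneOn g (Set.Icc (0:ℝ) T) := by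
    apply monotoneOn_of_deriv_nonneg (convex_Icc 0 T)
    · intro s hs
      exact (hg' s hs).continuousAt.continuousWithinAt
    · intro s hs
      rw [interior_Icc] at hs
      exact (hg' s (Set.Ioo_subset_Icc_self hs)).differentiableAt.differentiableWithinAt
    · intro s hs
      rw [interior_Icc] at hs
      rw [(hg' s (Set.Ioo_subset_Icc_self hs)).deriv]
      exact hnn s (Set.Ioo_subset_Icc_self hs)
  have h0 : (0:ℝ) ∈ Set.Icc (0:ℝ) T := Set.mem_Icc.mpr ⟨le_rfl, le_of_lt hT⟩
  have hgt : g 0 ≤ g t := hmono h0 ht ht.1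
  have hg0 : g 0 = Real.log K - Real.log (y 0) := by simp [hgdef]
  -- deduce: exp(-L t) * (log K - log y 0) ≤ log K - log y t
  have hexp : (0:ℝ) < Real.exp (L * t) := Real.exp_pos _
  have hz : Real.exp (-(L * t)) * (Real.log K - Real.log (y 0)) ≤ Real.log K - Real.log (y t) := by
    have := mul_le_mul_of_nonneg_left hgt (le_of_lt (Real.exp_pos (-(L*t))))
    rw [hg0] at this
    calc Real.exp (-(L * t)) * (Real.log K - Real.log (y 0))
        ≤ Real.exp (-(L * t)) * g t := this
      _ = Real.log K - Real.log (y t) := by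
          rw [hgdef]
          rw [show Real.exp (-(L*t)) * (Real.exp (L*t) * (Real.log K - Real.log (y t)))
              = (Real.exp (-(L*t)) * Real.exp (L*t)) * (Real.log K - Real.log (y t)) by ring,
            ← Real.exp_add]
          simp
  -- conclude
  have hy0 : 0 < y 0 := hpos 0 h0
  have hyt : 0 < y t := hpos t ht
  have hbase : 0 < y 0 / K := div_pos hy0 hK
  rw [Real.rpow_def_of_pos hbase]
  rw [show y t = Real.exp (Real.log (y t)) from (Real.exp_log hyt).symm,
    show K * Real.exp (Real.log (y 0 / K) * Real.exp (-L * t))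
      = Real.exp (Real.log K + Real.log (y 0 / K) * Real.exp (-L * t)) by
      rw [Real.exp_add, Real.exp_log hK]]
  apply Real.exp_le_exp.mpr
  rw [Real.log_div (ne_of_gt hy0) (ne_of_gt hK)]
  have : -L * t = -(L * t) := by ring
  rw [this]
  nlinarith [hz]
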